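/- There exists a partition of Cantor space 2^ω into two disjoint sets X and Y with X ∪ Y = 2^ω, both X and Y Bernstein sets, such that for every Polish space Z, neither the pair (Z, X) nor the pair (Z, Y) satisfies UU (where X and Y carry the subspace topology from 2^ω). -/

import Mathlib

/-- The pair (X, Y) satisfies UU: there is an open set `U ⊆ X × Y` such that
every open `W ⊆ Y` is the cross section `{y | (x, y) ∈ U}` for exactly one `x`. -/
def UU (X Y : Type*) [TopologicalSpace X] [TopologicalSpace Y] : Prop :=
  ∃ U : Set (X × Y), IsOpen U ∧
    ∀ W : Set Y, IsOpen W → ∃! x : X, {y | (x, y) ∈ U} = W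
/--  is a Bernstein subset of Cantor space: both  and its complement meet
every nonempty perfect subset. -/
def IsBernstein (B : Set (ℕ → Bool)) : Prop :=
  ∀ P : Set (ℕ → Bool), Perfect P → P.Nonempty →
    (B ∩ P).Nonempty ∧ (Bᶜ ∩ P).Nonempty

open Set Cardinal

namespace Stmt3

abbrev C2 := ℕ → Bool
abbrev NN := ℕ → ℕ

def Cyl (s : List Bool) : Set C2 := {y | ∀ i : Fin s.length, y i = s.get i}
def CylN (t : List ℕ) : Set NN := {u | ∀ i : Fin t.length, u i = t.get i}

abbrev Cand := Set (List Bool × List ℕ)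
def Vc (c : Cand) (u : NN) : Set C2 := {y | ∃ p ∈ c, u ∈ CylN p.2 ∧ y ∈ Cyl p.1}
def Dl (c : Cand) (u u' : NN) : Set C2 := (Vc c u \ Vc c u') ∪ (Vc c u' \ Vc c u)

lemma isOpen_Cyl (s : List Bool) : IsOpen (Cyl s) := by
  have : Cyl s = ⋂ i : Fin s.length, (fun y : C2 => y i) ⁻¹' {s.get i} := by
    ext y; simp [Cyl]
  rw [this]
  exact isOpen_iInter_of_finite fun i =>
    (continuous_apply (i : ℕ)).isOpen_preimage _ (isOpen_discrete _)

lemma isClosed_Cyl (s : List Bool) : IsClosed (Cyl s) := by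
  have : Cyl s = ⋂ i : Fin s.length, (fun y : C2 => y i) ⁻¹' {s.get i} := by
    ext y; simp [Cyl]
  rw [this]
  exact isClosed_iInter fun i =>
    IsClosed.preimage (continuous_apply (i : ℕ)) (isClosed_discrete _)

lemma isOpen_CylN (t : List ℕ) : IsOpen (CylN t) := by
  have : CylN t = ⋂ i : Fin t.length, (fun y : NN => y i) ⁻¹' {t.get i} := by
    ext y; simp [CylN]
  rw [this]
  exact isOpen_iInter_of_finite fun i =>
    (continuous_apply (i : ℕ)).isOpen_preimage _ (isOpen_discrete _)

/-- basis property for Cantor space cylinders -/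
lemma exists_cyl_subset {O : Set C2} (hO : IsOpen O) {y : C2} (hy : y ∈ O) :
    ∃ s : List Bool, y ∈ Cyl s ∧ Cyl s ⊆ O := by
  rcases isOpen_pi_iff.mp hO y hy with ⟨I, V, hIV, hsub⟩
  classical
  obtain ⟨n, hn⟩ : ∃ n, ∀ i ∈ I, i < n := ⟨(I.sup id) + 1, fun i hi =>
    Nat.lt_succ_of_le (Finset.le_sup (f := id) hi)⟩
  refine ⟨List.ofFn (fun i : Fin n => y i), ?_, ?_⟩
  · intro i; simp
  · intro z hz
    apply hsub
    intro i hi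
    have hlen : (i : ℕ) < (List.ofFn (fun i : Fin n => y i)).length := by
      simpa using hn i hi
    have := hz ⟨i, hlen⟩
    have hzy : z i = y i := by simpa using this
    rw [hzy]; exact (hIV i hi).2

/-- basis property for Baire space cylinders -/
lemma exists_cylN_subset {O : Set NN} (hO : IsOpen O) {u : NN} (hu : u ∈ O) :
    ∃ t : List ℕ, u ∈ CylN t ∧ CylN t ⊆ O := by
  rcases isOpen_pi_iff.mp hO u hu with ⟨I, V, hIV, hsub⟩
  classical
  obtain ⟨n, hn⟩ : ∃ n, ∀ i ∈ I, i < n := ⟨(I.sup id) + 1, fun i hi =>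
    Nat.lt_succ_of_le (Finset.le_sup (f := id) hi)⟩
  refine ⟨List.ofFn (fun i : Fin n => u i), ?_, ?_⟩
  · intro i; simp
  · intro z hz
    apply hsub
    intro i hi
    have hlen : (i : ℕ) < (List.ofFn (fun i : Fin n => u i)).length := by
      simpa using hn i hi
    have := hz ⟨i, hlen⟩
    have hzu : z i = u i := by simpa using this
    rw [hzu]; exact (hIV i hi).2

/-- Cylinders have continuum many elements. -/
lemma continuum_le_mk_Cyl (s : List Bool) : 𝔠 ≤ #(Cyl s) := by
  have : ∃ f : C2 → C2, Function.Injective f ∧ ∀ y, f y ∈ Cyl s := by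
    classical
    refine ⟨fun y i => if h : i < s.length then s.get ⟨i, h⟩ else y (i - s.length), ?_, ?_⟩
    · intro y₁ y₂ h
      funext k
      have := congrFun h (k + s.length)
      simpa using this
    · intro y i
      simp
  rcases this with ⟨f, hinj, hmem⟩
  calc 𝔠 = #C2 := by simp [mk_arrow]
  _ ≤ #(Cyl s) := mk_le_of_injective (f := fun y => (⟨f y, hmem y⟩ : Cyl s))
      (fun a b hab => hinj (by simpa using hab))

lemma fresh {A S : Set C2} (hA : 𝔠 ≤ #A) (hS : #S < 𝔠) : (A \ S).Nonempty := by
  rw [Set.nonempty_iff_ne_empty]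
  intro h
  have hsub : A ⊆ S := by
    intro x hx
    by_contra hxS
    exact (Set.eq_empty_iff_forall_notMem.mp h x) ⟨hx, hxS⟩
  exact absurd ((hA.trans (mk_le_mk_of_subset hsub))) (not_le.mpr hS)

/-- Perfect nonempty sets have at least continuum many elements. -/
lemma continuum_le_mk_of_perfect {P : Set C2} (hP : Perfect P) (hne : P.Nonempty) :
    𝔠 ≤ #P := by
  letI := TopologicalSpace.upgradeIsCompletelyMetrizable C2
  obtain ⟨f, hrange, _, hinj⟩ := hP.exists_nat_bool_injection hne
  calc 𝔠 = #C2 := by simp [mk_arrow]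
  _ ≤ #P := mk_le_of_injective (f := fun y => (⟨f y, hrange ⟨y, rfl⟩⟩ : P))
      (fun a b hab => hinj (by simpa using hab))

/-- From the Bernstein property: every closed uncountable set meets `B` (resp. `Bᶜ`)
off any given point. -/
lemma hits_closed {B : Set C2}
    (hB : ∀ P : Set C2, Perfect P → P.Nonempty → (B ∩ P).Nonempty ∧ (Bᶜ ∩ P).Nonempty)
    {K : Set C2} (hK : IsClosed K) (hunc : ¬K.Countable) (b₀ : C2) :
    ((B ∩ K) \ {b₀}).Nonempty ∧ ((Bᶜ ∩ K) \ {b₀}).Nonempty := by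
  obtain ⟨D, hD, hDne, hDK⟩ := exists_perfect_nonempty_of_isClosed_of_not_countable hK hunc
  obtain ⟨D₀, D₁, ⟨hD₀, hD₀ne, hD₀s⟩, ⟨hD₁, hD₁ne, hD₁s⟩, hdisj⟩ := hD.splitting hDne
  have : ∃ D', Perfect D' ∧ D'.Nonempty ∧ D' ⊆ D ∧ b₀ ∉ D' := by
    by_cases h : b₀ ∈ D₀
    · exact ⟨D₁, hD₁, hD₁ne, hD₁s, fun hb => (Set.disjoint_left.mp hdisj h) hb⟩
    · exact ⟨D₀, hD₀, hD₀ne, hD₀s, h⟩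
  obtain ⟨D', hD', hD'ne, hD'sub, hb₀⟩ := this
  obtain ⟨hB1, hB2⟩ := hB D' hD' hD'ne
  constructor
  · obtain ⟨x, hx1, hx2⟩ := hB1
    refine ⟨x, ⟨hx1, hDK (hD'sub hx2)⟩, fun hxx => hb₀ ?_⟩
    have : x = b₀ := by simpa using hxx
    rwa [this] at hx2
  · obtain ⟨x, hx1, hx2⟩ := hB2
    refine ⟨x, ⟨hx1, hDK (hD'sub hx2)⟩, fun hxx => hb₀ ?_⟩
    have : x = b₀ := by simpa using hxx
    rwa [this] at hx2

lemma isOpen_Vc (c : Cand) (u : NN) : IsOpen (Vc c u) := by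
  have : Vc c u = ⋃ p ∈ {p ∈ c | u ∈ CylN p.2}, Cyl p.1 := by
    ext y; simp [Vc]; tauto
  rw [this]
  exact isOpen_biUnion fun p _ => isOpen_Cyl _

lemma Dl_comm (c : Cand) (u u' : NN) : Dl c u u' = Dl c u' u := by
  rw [Dl, Dl, union_comm]

lemma mem_Dl {c : Cand} {u u' : NN} {y : C2} :
    y ∈ Dl c u u' ↔ ((y ∈ Vc c u ∧ y ∉ Vc c u') ∨ (y ∈ Vc c u' ∧ y ∉ Vc c u)) := by
  simp [Dl]

lemma Dl_eq_empty_iff {c : Cand} {u u' : NN} : Vc c u = Vc c u' ↔ Dl c u u' = ∅ := by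
  constructor
  · intro h; simp [Dl, h]
  · intro h
    ext y
    constructor
    · intro hy
      by_contra hy'
      exact absurd (mem_Dl.mpr (Or.inl ⟨hy, hy'⟩)) (by simp [h])
    · intro hy
      by_contra hy'
      exact absurd (mem_Dl.mpr (Or.inr ⟨hy, hy'⟩)) (by simp [h])

/-- If a difference of sections is uncountable it contains an uncountable closed set. -/
lemma exists_closed_unc_of_diff {c : Cand} {u : NN} {V' : Set C2} (hV' : IsOpen V')
    (h : ¬(Vc c u \ V').Countable) :
    ∃ K : Set C2, IsClosed K ∧ ¬K.Countable ∧ K ⊆ Vc c u \ V' := by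
  classical
  have hcover : Vc c u \ V' =
      ⋃ p ∈ {p ∈ c | u ∈ CylN p.2}, (Cyl p.1 \ V') := by
    ext y
    simp only [mem_diff, Vc, mem_setOf_eq, mem_iUnion]
    constructor
    · rintro ⟨⟨p, hp, hu, hy⟩, hyV⟩
      exact ⟨p, ⟨⟨hp, hu⟩, hy, hyV⟩⟩
    · rintro ⟨p, ⟨⟨hp, hu⟩, hy, hyV⟩⟩
      exact ⟨⟨p, hp, hu, hy⟩, hyV⟩
  by_contra hK
  push_neg at hK
  apply h
  rw [hcover]
  apply Set.Countable.biUnion (Set.to_countable _)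
  intro p hp
  by_contra hpc
  refine hK (Cyl p.1 \ V') ((isClosed_Cyl p.1).sdiff hV') hpc ?_
  rw [hcover]
  exact Set.subset_biUnion_of_mem (u := fun p => Cyl p.1 \ V') hp

/-- The two properties that a UU witness induces on the coded family of sections,
relative to the set `A`. -/
def Traces (c : Cand) (A : Set C2) : Prop :=
  (∀ W : Set ↥A, IsOpen W → ∃ u, Vc c u ∩ A = Subtype.val '' W) ∧
  (∀ u u', Vc c u ∩ A = Vc c u' ∩ A → Vc c u = Vc c u')

lemma kill1 {c : Cand} {A : Set C2}
    (h : ∃ u u', Vc c u ≠ Vc c u' ∧ Dl c u u' ∩ A = ∅) : ¬Traces c A := by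
  rintro ⟨_, hII⟩
  obtain ⟨u, u', hne, hDA⟩ := h
  apply hne
  apply hII
  ext y
  simp only [mem_inter_iff]
  constructor
  · rintro ⟨hy, hyA⟩
    refine ⟨?_, hyA⟩
    by_contra hy'
    exact absurd (by exact ⟨mem_Dl.mpr (Or.inl ⟨hy, hy'⟩), hyA⟩ :
      y ∈ Dl c u u' ∩ A) (by simp [hDA])
  · rintro ⟨hy, hyA⟩
    refine ⟨?_, hyA⟩
    by_contra hy'
    exact absurd (by exact ⟨mem_Dl.mpr (Or.inr ⟨hy, hy'⟩), hyA⟩ :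
      y ∈ Dl c u u' ∩ A) (by simp [hDA])

lemma kill2 {c : Cand} {A : Set C2}
    (hhit : ∀ K : Set C2, IsClosed K → ¬K.Countable → ∀ b : C2, ((A ∩ K) \ {b}).Nonempty)
    {u₀ : NN} {b₀ : C2} {S₀ : Set C2}
    (hb₀A : b₀ ∈ A) (hb₀V : b₀ ∈ Vc c u₀) (hS₀ : S₀ ⊆ A) (hb₀S : b₀ ∉ S₀)
    (hpairs : ∀ u', Vc c u' ≠ Vc c u₀ → (Dl c u₀ u').Countable →
      (Dl c u₀ u' ∩ S₀).Nonempty) :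
    ¬Traces c A := by
  rintro ⟨hI, _⟩
  obtain ⟨u', heq⟩ := hI {y : ↥A | (y : C2) ∈ Vc c u₀ ∧ (y : C2) ≠ b₀}
    (by
      have : {y : ↥A | (y : C2) ∈ Vc c u₀ ∧ (y : C2) ≠ b₀} =
          (Subtype.val) ⁻¹' (Vc c u₀ ∩ {b₀}ᶜ) := by
        ext y; simp [Set.mem_preimage]
      rw [this]
      exact ((isOpen_Vc c u₀).inter (isClosed_singleton.isOpen_compl)).preimage
        continuous_subtype_val)
  have himg : (Subtype.val : ↥A → C2) '' {y : ↥A | (y : C2) ∈ Vc c u₀ ∧ (y : C2) ≠ b₀} =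
      (Vc c u₀ ∩ A) \ {b₀} := by
    ext y
    simp only [Set.mem_image, mem_setOf_eq, mem_diff, mem_inter_iff, mem_singleton_iff]
    constructor
    · rintro ⟨z, ⟨hz1, hz2⟩, rfl⟩
      exact ⟨⟨hz1, z.2⟩, hz2⟩
    · rintro ⟨⟨h1, h2⟩, h3⟩
      exact ⟨⟨y, h2⟩, ⟨h1, h3⟩, rfl⟩
  rw [himg] at heq
  by_cases h0 : Vc c u' = Vc c u₀
  · rw [h0] at heq
    have : b₀ ∈ (Vc c u₀ ∩ A) \ {b₀} := by rw [← heq]; exact ⟨hb₀V, hb₀A⟩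
    exact this.2 rfl
  · have hb₀u' : b₀ ∉ Vc c u' := by
      intro hb
      have : b₀ ∈ (Vc c u₀ ∩ A) \ {b₀} := by rw [← heq]; exact ⟨hb, hb₀A⟩
      exact this.2 rfl
    have hDA : Dl c u₀ u' ∩ A = {b₀} := by
      ext y
      simp only [mem_inter_iff, mem_singleton_iff]
      constructor
      · rintro ⟨hyD, hyA⟩
        by_contra hyb
        have hmem : y ∈ Vc c u' ↔ (y ∈ Vc c u₀ ∧ y ≠ b₀) := by
          constructor
          · intro hy
            have : y ∈ (Vc c u₀ ∩ A) \ {b₀} := by rw [← heq]; exact ⟨hy, hyA⟩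
            exact ⟨this.1.1, fun hc => this.2 (by simp [hc])⟩
          · intro ⟨hy, _⟩
            have : y ∈ (Vc c u₀ ∩ A) \ {b₀} := ⟨⟨hy, hyA⟩, by simpa using hyb⟩
            rw [← heq] at this
            exact this.1
        rcases mem_Dl.mp hyD with ⟨h1, h2⟩ | ⟨h1, h2⟩
        · exact h2 (hmem.mpr ⟨h1, hyb⟩)
        · exact h2 (hmem.mp h1).1
      · rintro rfl
        exact ⟨mem_Dl.mpr (Or.inl ⟨hb₀V, hb₀u'⟩), hb₀A⟩
    by_cases hC : (Dl c u₀ u').Countable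
    · obtain ⟨x, hxD, hxS⟩ := hpairs u' h0 hC
      have : x = b₀ := by
        have : x ∈ Dl c u₀ u' ∩ A := ⟨hxD, hS₀ hxS⟩
        rwa [hDA] at this
      exact hb₀S (this ▸ hxS)
    · have : ¬(Vc c u₀ \ Vc c u').Countable ∨ ¬(Vc c u' \ Vc c u₀).Countable := by
        by_contra hc
        push_neg at hc
        exact hC (hc.1.union hc.2)
      have hK : ∃ K : Set C2, IsClosed K ∧ ¬K.Countable ∧ K ⊆ Dl c u₀ u' := by
        rcases this with h | h
        · obtain ⟨K, h1, h2, h3⟩ := exists_closed_unc_of_diff (isOpen_Vc c u') h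
          exact ⟨K, h1, h2, h3.trans subset_union_left⟩
        · obtain ⟨K, h1, h2, h3⟩ := exists_closed_unc_of_diff (isOpen_Vc c u₀) h
          exact ⟨K, h1, h2, h3.trans subset_union_right⟩
      obtain ⟨K, hKcl, hKunc, hKsub⟩ := hK
      obtain ⟨y, ⟨hyA, hyK⟩, hyb⟩ := hhit K hKcl hKunc b₀
      have : y = b₀ := by
        have : y ∈ Dl c u₀ u' ∩ A := ⟨hKsub hyK, hyA⟩
        rwa [hDA] at this
      exact hyb (by simp [this])

lemma kill3 {c : Cand} {A : Set C2} (h : ∀ u, Vc c u = ∅) (hne : A.Nonempty) :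
    ¬Traces c A := by
  rintro ⟨hI, _⟩
  obtain ⟨u, hu⟩ := hI univ isOpen_univ
  rw [h u, Subtype.coe_image_univ] at hu
  simp only [empty_inter] at hu
  exact hne.ne_empty hu.symm

/-- The index type for the transfinite construction. -/
abbrev Idx : Type := (𝔠 : Cardinal).ord.ToType

abbrev Perf : Type := {P : Set C2 // Perfect P ∧ P.Nonempty}

abbrev Duty : Type := Cand ⊕ Cand ⊕ Perf

lemma perfect_univ_C2 : Perfect (univ : Set C2) := by
  constructor
  · exact isClosed_univ
  · rw [preperfect_iff_nhds]
    intro x _ U hU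
    obtain ⟨O, hOU, hOopen, hxO⟩ := mem_nhds_iff.mp hU
    have : ∃ s : List Bool, x ∈ Cyl s ∧ Cyl s ⊆ O := by
      rcases isOpen_pi_iff.mp hOopen x hxO with ⟨I, V, hIV, hsub⟩
      classical
      obtain ⟨n, hn⟩ : ∃ n, ∀ i ∈ I, i < n := ⟨(I.sup id) + 1, fun i hi =>
        Nat.lt_succ_of_le (Finset.le_sup (f := id) hi)⟩
      refine ⟨List.ofFn (fun i : Fin n => x i), fun i => by simp, fun z hz => hsub ?_⟩
      intro i hi
      have hlen : (i : ℕ) < (List.ofFn (fun i : Fin n => x i)).length := by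
        simpa using hn i hi
      have := hz ⟨i, hlen⟩
      have hzx : z i = x i := by simpa using this
      rw [hzx]; exact (hIV i hi).2
    obtain ⟨s, hxs, hsO⟩ := this
    classical
    refine ⟨Function.update x s.length (!x s.length), ⟨hOU (hsO ?_), trivial⟩, ?_⟩
    · intro i
      have : (i : ℕ) ≠ s.length := Nat.ne_of_lt i.2
      rw [Function.update_of_ne this]
      exact hxs i
    · intro h
      have := congrFun h s.length
      rw [Function.update_self] at this
      exact (Bool.not_ne_self _) this

lemma mk_Cand : #Cand = 𝔠 := by
  have : #(List Bool × List ℕ) = ℵ₀ := mk_eq_aleph0 _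
  rw [show (Cand : Type) = Set (List Bool × List ℕ) from rfl, mk_set, this,
    two_power_aleph0]

lemma mk_Perf_le : #Perf ≤ 𝔠 := by
  have hinj : Function.Injective (fun P : Perf => {s : List Bool | Cyl s ∩ P.val = ∅}) := by
    have key : ∀ P Q : Perf,
        {s : List Bool | Cyl s ∩ P.val = ∅} = {s : List Bool | Cyl s ∩ Q.val = ∅} →
        P.val ⊆ Q.val := by
      intro P Q h y hyP
      by_contra hyQ
      have hopen : IsOpen Q.valᶜ := Q.2.1.closed.isOpen_compl
      have : ∃ s : List Bool, y ∈ Cyl s ∧ Cyl s ⊆ Q.valᶜ := by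
        rcases isOpen_pi_iff.mp hopen y hyQ with ⟨I, V, hIV, hsub⟩
        classical
        obtain ⟨n, hn⟩ : ∃ n, ∀ i ∈ I, i < n := ⟨(I.sup id) + 1, fun i hi =>
          Nat.lt_succ_of_le (Finset.le_sup (f := id) hi)⟩
        refine ⟨List.ofFn (fun i : Fin n => y i), fun i => by simp, fun z hz => hsub ?_⟩
        intro i hi
        have hlen : (i : ℕ) < (List.ofFn (fun i : Fin n => y i)).length := by
          simpa using hn i hi
        have := hz ⟨i, hlen⟩
        have hzy : z i = y i := by simpa using this
        rw [hzy]; exact (hIV i hi).2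
      obtain ⟨s, hys, hsQ⟩ := this
      have hsmem : s ∈ {s : List Bool | Cyl s ∩ Q.val = ∅} := by
        simp only [mem_setOf_eq, eq_empty_iff_forall_notMem]
        intro z ⟨hz1, hz2⟩
        exact (hsQ hz1) hz2
      rw [← h] at hsmem
      exact (eq_empty_iff_forall_notMem.mp hsmem y) ⟨hys, hyP⟩
    intro P Q h
    exact Subtype.ext (le_antisymm (key P Q h) (key Q P h.symm))
  calc #Perf ≤ #(Set (List Bool)) := mk_le_of_injective hinj
  _ = 𝔠 := by rw [mk_set, mk_eq_aleph0, two_power_aleph0]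

lemma mk_Idx : #Idx = 𝔠 := by
  rw [Cardinal.mk_toType, Cardinal.card_ord]

lemma mk_Duty_le : #Duty ≤ 𝔠 := by
  have h1 : #Duty = #Cand + (#Cand + #Perf) := by
    simp [Cardinal.mk_sum]
  rw [h1, mk_Cand]
  have : 𝔠 + (𝔠 + #Perf) ≤ 𝔠 + (𝔠 + 𝔠) := by
    gcongr
    exact mk_Perf_le
  refine this.trans ?_
  rw [Cardinal.add_eq_self aleph0_le_continuum, Cardinal.add_eq_self aleph0_le_continuum]

instance : Nonempty Duty :=
  ⟨Sum.inr (Sum.inr ⟨univ, perfect_univ_C2, ⟨fun _ => false, trivial⟩⟩)⟩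

noncomputable def dutyEmb : Duty ↪ Idx :=
  ((Cardinal.le_def Duty Idx).mp (by rw [mk_Idx]; exact mk_Duty_le)).some

noncomputable def duty : Idx → Duty := Function.invFun dutyEmb

lemma duty_surj : Function.Surjective duty :=
  Function.invFun_surjective dutyEmb.injective

/-- The specification of what a single kill-step achieves for a candidate, relative to the
prior own-side ledger. -/
def KillSpec (c : Cand) (pOwn nOwn nOther : Set C2) : Prop :=
  (∃ u u', Vc c u ≠ Vc c u' ∧ Dl c u u' ∩ pOwn = ∅ ∧ Dl c u u' ⊆ nOther)
  ∨ ((∀ u u', Vc c u' ≠ Vc c u → (Dl c u u').Countable → (Dl c u u' ∩ pOwn).Nonempty) ∧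
     ((∃ u, (Vc c u).Nonempty) → ∃ b₀ u₀, b₀ ∈ nOwn ∧ b₀ ∈ Vc c u₀ ∧ b₀ ∉ pOwn))

def DutySpec : Duty → Set C2 → Set C2 → Set C2 → Set C2 → Prop
  | .inl c => fun pb _ nb nc => KillSpec c pb nb nc
  | .inr (.inl c) => fun _ pc nb nc => KillSpec c pc nc nb
  | .inr (.inr P) => fun _ _ nb nc => (nb ∩ P.val).Nonempty ∧ (nc ∩ P.val).Nonempty

def StepSpec (i : Idx) (pb pc nb nc : Set C2) : Prop :=
  nb.Countable ∧ nc.Countable ∧ nb ∩ (pc ∪ nc) = ∅ ∧ nc ∩ pb = ∅ ∧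
    DutySpec (duty i) pb pc nb nc

lemma kill_stage_ex (c : Cand) (pOwn pAll : Set C2) (hsub : pOwn ⊆ pAll) (hAll : #pAll < 𝔠) :
    ∃ nOwn nOther : Set C2, nOwn.Countable ∧ nOther.Countable ∧
      nOwn ∩ pAll = ∅ ∧ nOther ∩ pOwn = ∅ ∧ nOwn ∩ nOther = ∅ ∧
      KillSpec c pOwn nOwn nOther := by
  classical
  by_cases h1 : ∃ u u', Vc c u ≠ Vc c u' ∧ (Dl c u u').Countable ∧ Dl c u u' ∩ pOwn = ∅
  · obtain ⟨u, u', hne, hct, hg⟩ := h1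
    exact ⟨∅, Dl c u u', countable_empty, hct, by simp, hg, by simp,
      Or.inl ⟨u, u', hne, hg, subset_rfl⟩⟩
  · have hpairs : ∀ u u', Vc c u' ≠ Vc c u → (Dl c u u').Countable →
        (Dl c u u' ∩ pOwn).Nonempty := by
      intro u u' hne hct
      rw [Set.nonempty_iff_ne_empty]
      intro hemp
      exact h1 ⟨u, u', hne.symm, hct, hemp⟩
    by_cases h2 : ∃ u, (Vc c u).Nonempty
    · obtain ⟨u₀, y₀, hy₀⟩ := h2
      obtain ⟨p, hp, hu, -⟩ := hy₀
      obtain ⟨b₀, hb1, hb2⟩ := fresh (continuum_le_mk_Cyl p.1) hAll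
      refine ⟨{b₀}, ∅, countable_singleton _, countable_empty, ?_, by simp, by simp,
        Or.inr ⟨hpairs, fun _ => ⟨b₀, u₀, rfl, ⟨p, hp, hu, hb1⟩, fun h => hb2 (hsub h)⟩⟩⟩
      rw [Set.eq_empty_iff_forall_notMem]
      rintro x ⟨hx1, hx2⟩
      rw [mem_singleton_iff] at hx1
      exact hb2 (hx1 ▸ hx2)
    · exact ⟨∅, ∅, countable_empty, countable_empty, by simp, by simp, by simp,
        Or.inr ⟨hpairs, fun hex => absurd hex h2⟩⟩

lemma step_ex (i : Idx) (pb pc : Set C2) (hb : #pb < 𝔠) (hc : #pc < 𝔠) :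
    ∃ nb nc : Set C2, StepSpec i pb pc nb nc := by
  classical
  have hAll : #(pb ∪ pc : Set C2) < 𝔠 :=
    lt_of_le_of_lt (Cardinal.mk_union_le _ _) (Cardinal.add_lt_of_lt aleph0_le_continuum hb hc)
  rcases hd : duty i with cB | cC | P
  · obtain ⟨nOwn, nOther, h1, h2, h3, h4, h5, h6⟩ :=
      kill_stage_ex cB pb (pb ∪ pc) subset_union_left hAll
    refine ⟨nOwn, nOther, ?_⟩
    unfold StepSpec
    rw [hd]
    refine ⟨h1, h2, ?_, ?_, h6⟩
    · rw [Set.eq_empty_iff_forall_notMem]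
      rintro x ⟨hx1, hx2⟩
      rcases hx2 with hx2 | hx2
      · exact (Set.eq_empty_iff_forall_notMem.mp h3 x) ⟨hx1, Or.inr hx2⟩
      · exact (Set.eq_empty_iff_forall_notMem.mp h5 x) ⟨hx1, hx2⟩
    · rw [Set.eq_empty_iff_forall_notMem]
      rintro x ⟨hx1, hx2⟩
      exact (Set.eq_empty_iff_forall_notMem.mp h4 x) ⟨hx1, hx2⟩
  · -- complement-side kill: roles of the two ledgers swapped
    obtain ⟨nOwn, nOther, h1, h2, h3, h4, h5, h6⟩ :=
      kill_stage_ex cC pc (pb ∪ pc) subset_union_right hAll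
    -- here nOwn goes to the C-ledger and nOther to the B-ledger
    refine ⟨nOther, nOwn, ?_⟩
    unfold StepSpec
    rw [hd]
    refine ⟨h2, h1, ?_, ?_, h6⟩
    · rw [Set.eq_empty_iff_forall_notMem]
      rintro x ⟨hx1, hx2⟩
      rcases hx2 with hx2 | hx2
      · exact (Set.eq_empty_iff_forall_notMem.mp h4 x) ⟨hx1, hx2⟩
      · exact (Set.eq_empty_iff_forall_notMem.mp h5 x) ⟨hx2, hx1⟩
    · rw [Set.eq_empty_iff_forall_notMem]
      rintro x ⟨hx1, hx2⟩
      exact (Set.eq_empty_iff_forall_notMem.mp h3 x) ⟨hx1, Or.inl hx2⟩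
  · -- Bernstein duty
    obtain ⟨b₁, hb1, hb2⟩ := fresh (continuum_le_mk_of_perfect P.2.1 P.2.2) hAll
    have hAll2 : #(pb ∪ pc ∪ {b₁} : Set C2) < 𝔠 := by
      refine lt_of_le_of_lt (Cardinal.mk_union_le _ _) ?_
      exact Cardinal.add_lt_of_lt aleph0_le_continuum hAll
        (lt_of_le_of_lt Cardinal.mk_le_aleph0 aleph0_lt_continuum)
    obtain ⟨b₂, hc1, hc2⟩ := fresh (continuum_le_mk_of_perfect P.2.1 P.2.2) hAll2
    refine ⟨{b₁}, {b₂}, ?_⟩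
    unfold StepSpec
    rw [hd]
    refine ⟨countable_singleton _, countable_singleton _, ?_, ?_, ?_, ?_⟩
    · rw [Set.eq_empty_iff_forall_notMem]
      rintro x ⟨hx1, hx2⟩
      rw [mem_singleton_iff] at hx1
      subst hx1
      rcases hx2 with hx2 | hx2
      · exact hb2 (Or.inr hx2)
      · rw [mem_singleton_iff] at hx2
        exact hc2 (by rw [← hx2]; exact Or.inr rfl)
    · rw [Set.eq_empty_iff_forall_notMem]
      rintro x ⟨hx1, hx2⟩
      rw [mem_singleton_iff] at hx1
      subst hx1
      exact hc2 (Or.inl (Or.inl hx2))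
    · exact ⟨b₁, rfl, hb1⟩
    · exact ⟨b₂, rfl, hc1⟩

noncomputable def pick (i : Idx) (pb pc : Set C2) : Set C2 × Set C2 :=
  if h : #pb < 𝔠 ∧ #pc < 𝔠 then
    ⟨(step_ex i pb pc h.1 h.2).choose, (step_ex i pb pc h.1 h.2).choose_spec.choose⟩
  else ⟨∅, ∅⟩

lemma pick_spec {i : Idx} {pb pc : Set C2} (h1 : #pb < 𝔠) (h2 : #pc < 𝔠) :
    StepSpec i pb pc (pick i pb pc).1 (pick i pb pc).2 := by
  rw [pick, dif_pos (⟨h1, h2⟩ : #pb < 𝔠 ∧ #pc < 𝔠)]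
  exact (step_ex i pb pc h1 h2).choose_spec.choose_spec

noncomputable def g : Idx → Set C2 × Set C2 :=
  WellFoundedLT.fix
    (fun i ih => pick i (⋃ j : {j // j < i}, (ih j j.2).1) (⋃ j : {j // j < i}, (ih j j.2).2))

def PB (i : Idx) : Set C2 := ⋃ j : {j // j < i}, (g j).1
def PC (i : Idx) : Set C2 := ⋃ j : {j // j < i}, (g j).2

lemma g_eq (i : Idx) : g i = pick i (PB i) (PC i) := by
  rw [g, WellFoundedLT.fix_eq]
  rfl

lemma g_ctble (i : Idx) : (g i).1.Countable ∧ (g i).2.Countable := by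
  rw [g_eq, pick]
  split_ifs with h
  · have hs := (step_ex i (PB i) (PC i) h.1 h.2).choose_spec.choose_spec
    exact ⟨hs.1, hs.2.1⟩
  · simp

lemma PB_lt (i : Idx) : #(PB i) < 𝔠 ∧ #(PC i) < 𝔠 := by
  have hidx : #{j : Idx // j < i} < 𝔠 := Cardinal.mk_Iio_ord_toType i
  constructor
  · rcases isEmpty_or_nonempty {j : Idx // j < i} with he | hne
    · rw [PB, iUnion_of_empty]
      simpa using aleph0_lt_continuum.trans_le' (by simp)
    · refine lt_of_le_of_lt (Cardinal.mk_iUnion_le _) ?_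
      refine Cardinal.mul_lt_of_lt aleph0_le_continuum hidx ?_
      refine lt_of_le_of_lt (ciSup_le' fun j => ?_) aleph0_lt_continuum
      exact Cardinal.mk_le_aleph0_iff.mpr ((g_ctble j).1).to_subtype
  · rcases isEmpty_or_nonempty {j : Idx // j < i} with he | hne
    · rw [PC, iUnion_of_empty]
      simpa using aleph0_lt_continuum.trans_le' (by simp)
    · refine lt_of_le_of_lt (Cardinal.mk_iUnion_le _) ?_
      refine Cardinal.mul_lt_of_lt aleph0_le_continuum hidx ?_
      refine lt_of_le_of_lt (ciSup_le' fun j => ?_) aleph0_lt_continuum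
      exact Cardinal.mk_le_aleph0_iff.mpr ((g_ctble j).2).to_subtype

lemma g_spec (i : Idx) : StepSpec i (PB i) (PC i) (g i).1 (g i).2 := by
  rw [g_eq]
  exact pick_spec (PB_lt i).1 (PB_lt i).2

/-- The Bernstein set. -/
def BB : Set C2 := ⋃ i, (g i).1
def CC : Set C2 := ⋃ i, (g i).2

lemma gB_subset (i : Idx) : (g i).1 ⊆ BB := subset_iUnion (fun i => (g i).1) i
lemma gC_subset (i : Idx) : (g i).2 ⊆ CC := subset_iUnion (fun i => (g i).2) i
lemma PB_subset (i : Idx) : PB i ⊆ BB := iUnion_subset fun j => gB_subset j.1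
lemma PC_subset (i : Idx) : PC i ⊆ CC := iUnion_subset fun j => gC_subset j.1
lemma gB_subset_PB {i j : Idx} (h : i < j) : (g i).1 ⊆ PB j :=
  subset_iUnion (fun k : {k // k < j} => (g k.1).1) ⟨i, h⟩
lemma gC_subset_PC {i j : Idx} (h : i < j) : (g i).2 ⊆ PC j :=
  subset_iUnion (fun k : {k // k < j} => (g k.1).2) ⟨i, h⟩

lemma BB_CC_disjoint : BB ∩ CC = ∅ := by
  rw [Set.eq_empty_iff_forall_notMem]
  rintro x ⟨hxB, hxC⟩
  obtain ⟨_, ⟨i, rfl⟩, hxi⟩ := hxB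
  obtain ⟨_, ⟨j, rfl⟩, hxj⟩ := hxC
  rcases lt_trichotomy i j with h | h | h
  · exact (Set.eq_empty_iff_forall_notMem.mp (g_spec j).2.2.2.1 x)
      ⟨hxj, gB_subset_PB h hxi⟩
  · subst h
    exact (Set.eq_empty_iff_forall_notMem.mp (g_spec i).2.2.1 x) ⟨hxi, Or.inr hxj⟩
  · exact (Set.eq_empty_iff_forall_notMem.mp (g_spec i).2.2.1 x)
      ⟨hxi, Or.inl (gC_subset_PC h hxj)⟩

lemma CC_subset_compl : CC ⊆ BBᶜ := by
  intro x hx hxB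
  exact (Set.eq_empty_iff_forall_notMem.mp BB_CC_disjoint x) ⟨hxB, hx⟩

lemma BB_bernstein :
    ∀ P : Set C2, Perfect P → P.Nonempty → (BB ∩ P).Nonempty ∧ (BBᶜ ∩ P).Nonempty := by
  intro P hP hne
  obtain ⟨i, hi⟩ := duty_surj (Sum.inr (Sum.inr ⟨P, hP, hne⟩))
  have hspec := (g_spec i).2.2.2.2
  rw [hi] at hspec
  simp only [DutySpec] at hspec
  obtain ⟨⟨x, hx1, hx2⟩, ⟨y, hy1, hy2⟩⟩ := hspec
  exact ⟨⟨x, gB_subset i hx1, hx2⟩, ⟨y, CC_subset_compl (gC_subset i hy1), hy2⟩⟩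

lemma BB_nonempty : BB.Nonempty := by
  obtain ⟨⟨x, hx, -⟩, -⟩ := BB_bernstein univ perfect_univ_C2 ⟨fun _ => false, trivial⟩
  exact ⟨x, hx⟩

lemma CC_nonempty : BBᶜ.Nonempty := by
  obtain ⟨-, ⟨x, hx, -⟩⟩ := BB_bernstein univ perfect_univ_C2 ⟨fun _ => false, trivial⟩
  exact ⟨x, hx⟩

lemma defeatB (c : Cand) : ¬Traces c BB := by
  obtain ⟨i, hi⟩ := duty_surj (Sum.inl c)
  have hspec := (g_spec i).2.2.2.2
  rw [hi] at hspec
  simp only [DutySpec] at hspec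
  rcases hspec with ⟨u, u', hne, -, hsub⟩ | ⟨hpairs, hbex⟩
  · refine kill1 ⟨u, u', hne, ?_⟩
    rw [Set.eq_empty_iff_forall_notMem]
    rintro x ⟨hx1, hx2⟩
    exact (Set.eq_empty_iff_forall_notMem.mp BB_CC_disjoint x)
      ⟨hx2, gC_subset i (hsub hx1)⟩
  · by_cases hex : ∃ u, (Vc c u).Nonempty
    · obtain ⟨b₀, u₀, h1, h2, h3⟩ := hbex hex
      refine kill2 (fun K hK hunc b => (hits_closed BB_bernstein hK hunc b).1)
        (gB_subset i h1) h2 (PB_subset i) h3 ?_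
      intro u' hne hct
      exact hpairs u₀ u' hne hct
    · push_neg at hex
      exact kill3 (fun u => hex u) BB_nonempty

lemma defeatC (c : Cand) : ¬Traces c BBᶜ := by
  obtain ⟨i, hi⟩ := duty_surj (Sum.inr (Sum.inl c))
  have hspec := (g_spec i).2.2.2.2
  rw [hi] at hspec
  simp only [DutySpec] at hspec
  rcases hspec with ⟨u, u', hne, -, hsub⟩ | ⟨hpairs, hbex⟩
  · refine kill1 ⟨u, u', hne, ?_⟩
    rw [Set.eq_empty_iff_forall_notMem]
    rintro x ⟨hx1, hx2⟩
    exact hx2 (gB_subset i (hsub hx1))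
  · by_cases hex : ∃ u, (Vc c u).Nonempty
    · obtain ⟨b₀, u₀, h1, h2, h3⟩ := hbex hex
      refine kill2 (fun K hK hunc b => (hits_closed BB_bernstein hK hunc b).2)
        (CC_subset_compl (gC_subset i h1)) h2
        (fun x hx => CC_subset_compl (PC_subset i hx)) h3 ?_
      intro u' hne hct
      exact hpairs u₀ u' hne hct
    · push_neg at hex
      exact kill3 (fun u => hex u) CC_nonempty

theorem traces_of_uu {Z : Type} [TopologicalSpace Z] [PolishSpace Z] {A : Set C2}
    {U : Set (Z × ↥A)} (hU : IsOpen U)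
    (hWit : ∀ W : Set ↥A, IsOpen W → ∃! x : Z, {y | (x, y) ∈ U} = W) :
    ∃ c : Cand, Traces c A := by
  classical
  -- Z is nonempty
  have hZne : Nonempty Z := by
    obtain ⟨x, -, -⟩ := hWit ∅ isOpen_empty
    exact ⟨x⟩
  obtain ⟨f, hfc, hfs⟩ := PolishSpace.exists_nat_nat_continuous_surjective Z
  -- the largest open set of codes for a basic box
  set Ws : List Bool → Set Z :=
    fun s => ⋃₀ {V | IsOpen V ∧ (V ×ˢ {y : ↥A | (y : C2) ∈ Cyl s}) ⊆ U} with hWs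
  have hWsOpen : ∀ s, IsOpen (Ws s) := fun s =>
    isOpen_sUnion (fun V hV => hV.1)
  set c : Cand := {p | CylN p.2 ⊆ f ⁻¹' (Ws p.1)} with hc
  -- sections of the coded family
  have key1 : ∀ u, Vc c u = {y | ∃ s, f u ∈ Ws s ∧ y ∈ Cyl s} := by
    intro u
    ext y
    constructor
    · rintro ⟨p, hp, hu, hy⟩
      exact ⟨p.1, hp hu, hy⟩
    · rintro ⟨s, hfu, hy⟩
      have : u ∈ f ⁻¹' (Ws s) := hfu
      obtain ⟨t, hut, hts⟩ := exists_cylN_subset ((hWsOpen s).preimage hfc) this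
      exact ⟨(s, t), hts, hut, hy⟩
  -- trace identity
  have key2 : ∀ x : Z, {y | ∃ s, x ∈ Ws s ∧ y ∈ Cyl s} ∩ A =
      Subtype.val '' {y : ↥A | (x, y) ∈ U} := by
    intro x
    ext y
    simp only [mem_inter_iff, mem_setOf_eq, Set.mem_image]
    constructor
    · rintro ⟨⟨s, hxs, hys⟩, hyA⟩
      refine ⟨⟨y, hyA⟩, ?_, rfl⟩
      obtain ⟨V, ⟨hVopen, hVsub⟩, hxV⟩ := hxs
      exact hVsub (Set.mem_prod.mpr ⟨hxV, by simpa using hys⟩)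
    · rintro ⟨⟨y', hy'A⟩, hyU, rfl⟩
      refine ⟨?_, hy'A⟩
      obtain ⟨V, T, hVopen, hTopen, hxV, hyT, hsub⟩ :=
        isOpen_prod_iff.mp hU x ⟨y', hy'A⟩ hyU
      obtain ⟨O, hOopen, hOT⟩ := isOpen_induced_iff.mp hTopen
      have hyO : y' ∈ O := by
        have : (⟨y', hy'A⟩ : ↥A) ∈ T := hyT
        rw [← hOT] at this
        exact this
      obtain ⟨s, hys, hsO⟩ := exists_cyl_subset hOopen hyO
      refine ⟨s, ?_, hys⟩
      refine ⟨V, ⟨hVopen, ?_⟩, hxV⟩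
      intro q hq
      apply hsub
      obtain ⟨hq1, hq2⟩ := Set.mem_prod.mp hq
      refine Set.mem_prod.mpr ⟨hq1, ?_⟩
      have : q.2 ∈ (Subtype.val) ⁻¹' O := hsO hq2
      rw [hOT] at this
      exact this
  refine ⟨c, ?_, ?_⟩
  · -- surjectivity onto traces
    intro W hW
    obtain ⟨x, hx, -⟩ := hWit W hW
    obtain ⟨u, rfl⟩ := hfs x
    refine ⟨u, ?_⟩
    rw [key1, key2, hx]
  · -- injectivity of traces
    intro u u' htr
    rw [key1, key1, key2, key2] at htr
    have hsec : {y : ↥A | (f u, y) ∈ U} = {y : ↥A | (f u', y) ∈ U} :=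
      Set.image_injective.mpr Subtype.val_injective htr
    have hopen : IsOpen {y : ↥A | (f u, y) ∈ U} := by
      have : {y : ↥A | (f u, y) ∈ U} = (fun y : ↥A => (f u, y)) ⁻¹' U := rfl
      rw [this]
      exact hU.preimage (Continuous.prodMk_right (f u))
    obtain ⟨x, -, huniq⟩ := hWit _ hopen
    have h1 : f u = x := huniq (f u) rfl
    have h2 : f u' = x := huniq (f u') hsec.symm
    rw [key1, key1, h1.trans h2.symm]

end Stmt3

theorem stmt_3 : ∃ X Y : Set (ℕ → Bool),
    X ∩ Y = ∅ ∧ X ∪ Y = Set.univ ∧ IsBernstein X ∧ IsBernstein Y ∧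
    ∀ (Z : Type) [TopologicalSpace Z] [PolishSpace Z],
      ¬ UU Z X ∧ ¬ UU Z Y := by
  refine ⟨Stmt3.BB, Stmt3.BBᶜ, Set.inter_compl_self _, Set.union_compl_self _, ?_, ?_, ?_⟩
  · exact Stmt3.BB_bernstein
  · intro P hP hne
    obtain ⟨h1, h2⟩ := Stmt3.BB_bernstein P hP hne
    rw [compl_compl]
    exact ⟨h2, h1⟩
  · intro Z _ _
    constructor
    · rintro ⟨U, hU, hWit⟩
      obtain ⟨c, hc⟩ := Stmt3.traces_of_uu hU hWit
      exact Stmt3.defeatB c hc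
    · rintro ⟨U, hU, hWit⟩
      obtain ⟨c, hc⟩ := Stmt3.traces_of_uu hU hWit
      exact Stmt3.defeatC c hc
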